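/- Let E be a real normed vector space, let k ≥ 1 be a natural number, and let f : E → ℝ be C^k on E ∖ {0} (ContDiffOn ℝ k f {0}ᶜ) and positively homogeneous of degree k − 1: f(t • x) = t^(k−1) • f(x) for all real t > 0 and all x ≠ 0 (natural number power). Then for every x ≠ 0 and every family of vectors v : Fin k → E with v 0 = x, the k-th iterated Fréchet derivative of f within {0}ᶜ at x vanishes on v: iteratedFDerivWithin ℝ k f {0}ᶜ x v = 0. -/

import Mathlib

/-- Flat-model form of `X^{A₁} D_{A₁} ⋯ D_{A_k} σ = 0`: if `f : E → ℝ` is `C^k` away from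
the origin and positively homogeneous of degree `k − 1` (so each `(k−1)`-fold derivative
is homogeneous of degree `0`), then the `k`-th iterated Fréchet derivative of `f` within
`{0}ᶜ` at `x ≠ 0` vanishes whenever the outermost direction is the radial direction `x`. -/
theorem iteratedFDeriv_homogeneous_radial_vanish
    {E : Type*} [NormedAddCommGroup E] [NormedSpace ℝ E]
    (k : ℕ) (hk : 1 ≤ k) (f : E → ℝ)
    (hf : ContDiffOn ℝ k f ({(0 : E)}ᶜ))
    (hhom : ∀ t : ℝ, 0 < t → ∀ x : E, x ≠ 0 → f (t • x) = (t ^ (k - 1)) • f x) :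
    ∀ x : E, x ≠ 0 → ∀ v : Fin k → E, v ⟨0, hk⟩ = x →
      iteratedFDerivWithin ℝ k f ({(0 : E)}ᶜ) x v = 0 := by
  obtain ⟨n, rfl⟩ : ∃ n, k = n + 1 := ⟨k - 1, (Nat.succ_pred_eq_of_pos hk).symm⟩
  set s : Set E := {(0 : E)}ᶜ with hs_def
  have hs_open : IsOpen s := isOpen_compl_singleton
  have hs_ud : UniqueDiffOn ℝ s := hs_open.uniqueDiffOn
  have hn : ((n : ℕ) : WithTop ℕ∞) ≤ ((n + 1 : ℕ) : WithTop ℕ∞) := by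
    exact_mod_cast Nat.le_succ n
  -- the (k-1)-st derivative is homogeneous of degree 0
  have key : ∀ t : ℝ, 0 < t → ∀ x : E, x ≠ 0 →
      iteratedFDerivWithin ℝ n f s (t • x) = iteratedFDerivWithin ℝ n f s x := by
    intro t ht x hx
    set g : E →L[ℝ] E := t • ContinuousLinearMap.id ℝ E with hg_def
    have hg : ∀ y : E, g y = t • y := fun y => rfl
    have hpre : g ⁻¹' s = s := by
      ext y
      simp [hg, smul_eq_zero, ht.ne', s]
    have htx : g x ∈ s := by
      simp [hg, smul_eq_zero, ht.ne', hx, s]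
    have comp_eq : iteratedFDerivWithin ℝ n (f ∘ g) s x =
        (iteratedFDerivWithin ℝ n f s (g x)).compContinuousLinearMap fun _ => g := by
      have h's : UniqueDiffOn ℝ (g ⁻¹' s) := by rw [hpre]; exact hs_ud
      have := g.iteratedFDerivWithin_comp_right (hf.of_le hn) hs_ud h's htx (le_refl (n : WithTop ℕ∞))
      rwa [hpre] at this
    have congr_eq : iteratedFDerivWithin ℝ n (f ∘ g) s x =
        iteratedFDerivWithin ℝ n (fun y => (t ^ n) • f y) s x := by
      have heq : Set.EqOn (f ∘ g) (fun y => (t ^ n) • f y) s := fun y hy => by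
        simpa [hg] using hhom t ht y hy
      exact iteratedFDerivWithin_congr heq hx n
    have smul_eq : iteratedFDerivWithin ℝ n (fun y => (t ^ n) • f y) s x =
        (t ^ n) • iteratedFDerivWithin ℝ n f s x := by
      exact iteratedFDerivWithin_const_smul_apply (a := t ^ n) ((hf.of_le hn) x hx) hs_ud hx
    ext w
    have happ := congrFun (congrArg DFunLike.coe (comp_eq.symm.trans (congr_eq.trans smul_eq))) w
    simp only [ContinuousMultilinearMap.compContinuousLinearMap_apply,
      ContinuousMultilinearMap.smul_apply] at happ
    have hlhs : (iteratedFDerivWithin ℝ n f s (g x)) (fun i => g (w i)) =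
        (t ^ n) • (iteratedFDerivWithin ℝ n f s (g x)) w := by
      simp only [hg]
      rw [ContinuousMultilinearMap.map_smul_univ]
      simp [Finset.prod_const, smul_eq_mul]
    rw [hlhs] at happ
    have htn : (0 : ℝ) < t ^ n := pow_pos ht n
    have := smul_right_injective ℝ htn.ne' happ
    simpa [hg] using this
  intro x hx v hv
  -- differentiability of the (k-1)-st derivative
  have hdiff : DifferentiableOn ℝ (iteratedFDerivWithin ℝ n f s) s :=
    hf.differentiableOn_iteratedFDerivWithin (by exact_mod_cast Nat.lt_succ_self n) hs_ud
  have hdiffAt : DifferentiableAt ℝ (iteratedFDerivWithin ℝ n f s) x :=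
    (hdiff x hx).differentiableAt (hs_open.mem_nhds hx)
  -- radial derivative of the (k-1)-st derivative vanishes
  have hrad : fderiv ℝ (iteratedFDerivWithin ℝ n f s) x x = 0 := by
    have hc : HasDerivAt (fun t : ℝ => t • x) x 1 := by
      simpa using (hasDerivAt_id (1 : ℝ)).smul_const x
    have hF : HasFDerivAt (iteratedFDerivWithin ℝ n f s)
        (fderiv ℝ (iteratedFDerivWithin ℝ n f s) x) ((1 : ℝ) • x) := by
      rw [one_smul]; exact hdiffAt.hasFDerivAt
    have hcomp : HasDerivAt (fun t : ℝ => iteratedFDerivWithin ℝ n f s (t • x))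
        (fderiv ℝ (iteratedFDerivWithin ℝ n f s) x x) 1 := by
      exact hF.comp_hasDerivAt 1 hc
    have heq : (fun t : ℝ => iteratedFDerivWithin ℝ n f s (t • x)) =ᶠ[nhds (1 : ℝ)]
        (fun _ => iteratedFDerivWithin ℝ n f s x) := by
      filter_upwards [eventually_gt_nhds (by norm_num : (0 : ℝ) < 1)] with t ht
      exact key t ht x hx
    have hconst : HasDerivAt (fun t : ℝ => iteratedFDerivWithin ℝ n f s (t • x)) 0 1 :=
      (hasDerivAt_const (1 : ℝ) (iteratedFDerivWithin ℝ n f s x)).congr_of_eventuallyEq heq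
    exact hcomp.unique hconst
  -- conclude
  have h0 : (⟨0, hk⟩ : Fin (n + 1)) = 0 := rfl
  rw [iteratedFDerivWithin_succ_apply_left]
  rw [fderivWithin_of_isOpen hs_open hx]
  rw [h0] at hv
  rw [hv, hrad]
  rfl
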